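/- Among connected unweighted simple graphs on n vertices, the path graph maximizes the average shortest path length; i.e., for any connected graph G on n vertices, a_G ≤ (n+1)/3. -/
import Mathlib

open Finset

section Aux

variable {V : Type} 

/-- If every value `≤ f u` is attained on `s`, then the sum of `f` over `s` is at most
`0 + 1 + ⋯ + (|s| - 1)`. -/
lemma level_sum_aux [DecidableEq V] (f : V → ℕ) :
    ∀ s : Finset V, (∀ u ∈ s, ∀ j ≤ f u, ∃ w ∈ s, f w = j) →
      2 * ∑ u ∈ s, f u ≤ s.card * (s.card - 1) := by
  intro s
  induction s using Finset.strongInduction with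
  | _ s ih =>
    intro hs
    rcases s.eq_empty_or_nonempty with rfl | hne
    · simp
    · have hne' : (s.image f).Nonempty := hne.image f
      obtain ⟨u0, hu0s, hu0⟩ := Finset.mem_image.mp ((s.image f).max'_mem hne')
      set m := (s.image f).max' hne' with hm
      have hle : ∀ u ∈ s, f u ≤ m := fun u hu =>
        Finset.le_max' _ _ (Finset.mem_image_of_mem f hu)
      have hrange : Finset.range (m + 1) ⊆ s.image f := by
        intro j hj
        rw [Finset.mem_range, Nat.lt_succ_iff] at hj
        obtain ⟨w, hw, hfw⟩ := hs u0 hu0s j (hu0 ▸ hj)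
        exact Finset.mem_image.mpr ⟨w, hw, hfw⟩
      have hcard : m + 1 ≤ s.card := by
        calc m + 1 = (Finset.range (m + 1)).card := by simp
        _ ≤ (s.image f).card := Finset.card_le_card hrange
        _ ≤ s.card := Finset.card_image_le
      have herase : ∀ u ∈ s.erase u0, ∀ j ≤ f u, ∃ w ∈ s.erase u0, f w = j := by
        intro u hu j hj
        rcases eq_or_lt_of_le hj with rfl | hlt
        · exact ⟨u, hu, rfl⟩
        · obtain ⟨w, hw, hfw⟩ := hs u (Finset.mem_of_mem_erase hu) j hj
          refine ⟨w, Finset.mem_erase.mpr ⟨?_, hw⟩, hfw⟩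
          rintro rfl
          have := hle u (Finset.mem_of_mem_erase hu)
          omega
      have h1 := ih (s.erase u0) (Finset.erase_ssubset hu0s) herase
      have hsum : ∑ u ∈ s, f u = f u0 + ∑ u ∈ s.erase u0, f u :=
        (Finset.add_sum_erase s f hu0s).symm
      have hcard' : (s.erase u0).card = s.card - 1 := Finset.card_erase_of_mem hu0s
      obtain ⟨c, hc⟩ : ∃ c, s.card = c + 1 := ⟨s.card - 1, by omega⟩
      rw [hsum, hc]
      rw [hcard', hc] at h1
      have hm' : f u0 ≤ c := by omega
      rcases Nat.eq_zero_or_pos c with rfl | hcpos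
      · have he : s.erase u0 = ∅ := Finset.card_eq_zero.mp (by omega)
        rw [he]
        simp only [Finset.sum_empty]
        omega
      · obtain ⟨d, hd⟩ : ∃ d, c = d + 1 := ⟨c - 1, by omega⟩
        subst hd
        simp only [Nat.add_sub_cancel] at h1 ⊢
        nlinarith [h1, hm']

variable (G : SimpleGraph V)

/-- Vertices along a shortest walk realize all intermediate distances. -/
lemma exists_dist_eq_of_le (hG : G.Connected) (v u : V) :
    ∀ j ≤ G.dist v u, ∃ w, G.dist v w = j := by
  have key : ∀ (a b : V) (p : G.Walk a b) (j : ℕ), j ≤ p.length →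
      G.dist a (p.getVert j) ≤ j := by
    intro a b p j
    induction j with
    | zero => intro _; simp [p.getVert_zero]
    | succ k ihk =>
      intro hj
      have h1 : G.dist a (p.getVert k) ≤ k := ihk (by omega)
      have hadj : G.Adj (p.getVert k) (p.getVert (k + 1)) :=
        p.adj_getVert_succ (by omega)
      calc G.dist a (p.getVert (k + 1))
          ≤ G.dist a (p.getVert k) + G.dist (p.getVert k) (p.getVert (k + 1)) :=
            hG.dist_triangle
        _ ≤ k + 1 := by
            have : G.dist (p.getVert k) (p.getVert (k + 1)) = 1 :=
              (SimpleGraph.dist_eq_one_iff_adj).mpr hadj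
            omega
  intro j hj
  obtain ⟨p, hp⟩ := hG.exists_walk_length_eq_dist v u
  refine ⟨p.getVert j, le_antisymm (key v u p j (by omega)) ?_⟩
  -- lower bound: use the reversed walk to bound `dist u (p.getVert j)`
  have hjl : j ≤ p.length := by omega
  have hrev : G.dist u (p.getVert j) ≤ p.length - j := by
    have := key u v p.reverse (p.length - j) (by simp)
    rwa [p.getVert_reverse, Nat.sub_sub_self hjl] at this
  have htri : G.dist v u ≤ G.dist v (p.getVert j) + G.dist (p.getVert j) u :=
    hG.dist_triangle
  have hcm : G.dist (p.getVert j) u = G.dist u (p.getVert j) := SimpleGraph.dist_comm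
  omega

/-- Lifting a walk avoiding `v` to the subgraph induced on `{u // u ≠ v}`. -/
lemma reachable_comap_of_walk (v : V) {a b : V} (p : G.Walk a b)
    (hp : ∀ x ∈ p.support, x ≠ v) :
    (G.comap (Subtype.val : {u : V // u ≠ v} → V)).Reachable
      ⟨a, hp a p.start_mem_support⟩ ⟨b, hp b p.end_mem_support⟩ := by
  induction p with
  | nil => rfl
  | @cons a c b h q ih =>
    have hq : ∀ x ∈ q.support, x ≠ v := fun x hx =>
      hp x (by simp [SimpleGraph.Walk.support_cons, hx])
    have h1 : (G.comap (Subtype.val : {u : V // u ≠ v} → V)).Adj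
        ⟨a, hp a (by simp [SimpleGraph.Walk.support_cons])⟩
        ⟨c, hq c q.start_mem_support⟩ := h
    exact (h1.reachable).trans (ih hq)

end Aux

/-- The Wiener-index bound: for a connected graph on `n` vertices, the sum of all
pairwise distances (over ordered pairs) is at most `(n-1)n(n+1)/3`. -/
lemma wiener_bound : ∀ (n : ℕ) (V : Type) [Fintype V] [DecidableEq V]
    (G : SimpleGraph V), Fintype.card V = n → G.Connected →
    3 * ∑ i, ∑ j, G.dist i j ≤ (n - 1) * n * (n + 1) := by
  intro n
  induction n using Nat.strong_induction_on with
  | _ n ih =>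
    intro V _ _ G hcard hG
    rcases le_or_gt n 1 with hn1 | hn2
    · -- at most one vertex: all distances are 0
      have hsub : ∀ i j : V, i = j := by
        intro i j
        have : Fintype.card V ≤ 1 := by omega
        exact Fintype.card_le_one_iff.mp this i j
      have : ∀ i j : V, G.dist i j = 0 := fun i j => by
        rw [hsub i j]; exact SimpleGraph.dist_self
      simp [this]
    · -- n ≥ 2
      have hne : Nonempty V := by
        rw [← Fintype.card_pos_iff]; omega
      obtain ⟨r⟩ := hne
      obtain ⟨v, -, hv⟩ := Finset.exists_max_image Finset.univ (G.dist r)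
        ⟨r, Finset.mem_univ r⟩
      have hvmax : ∀ u : V, G.dist r u ≤ G.dist r v := fun u => hv u (Finset.mem_univ u)
      have hvr : v ≠ r := by
        obtain ⟨u, hu⟩ := Fintype.exists_ne_of_one_lt_card (by omega) r
        have h1 : 0 < G.dist r u := hG.pos_dist_of_ne (Ne.symm hu)
        have h2 := hvmax u
        intro hveq
        rw [hveq, SimpleGraph.dist_self] at h2
        omega
      -- every vertex ≠ v admits a shortest walk from r avoiding v
      have hwalk : ∀ u : V, u ≠ v → ∃ p : G.Walk r u, ∀ x ∈ p.support, x ≠ v := by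
        intro u hu
        obtain ⟨p, hp⟩ := hG.exists_walk_length_eq_dist r u
        refine ⟨p, fun x hx hxv => ?_⟩
        subst hxv
        have hq := p.take_spec hx
        have hlen : (p.takeUntil x hx).length + (p.dropUntil x hx).length = p.length := by
          rw [← SimpleGraph.Walk.length_append, hq]
        have h1 : G.dist r x ≤ (p.takeUntil x hx).length :=
          SimpleGraph.dist_le _
        have h2 : 1 ≤ (p.dropUntil x hx).length := by
          rcases Nat.eq_zero_or_pos (p.dropUntil x hx).length with h0 | h0
          · exact absurd (SimpleGraph.Walk.eq_of_length_eq_zero h0).symm hu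
          · exact h0
        have h3 := hvmax u
        omega
      -- the graph with v removed
      set V' := {u : V // u ≠ v} with hV'
      set G' := G.comap (Subtype.val : V' → V) with hG'
      have hcard' : Fintype.card V' = n - 1 := by
        have : Fintype.card V' = Fintype.card V - Fintype.card {u : V // u = v} :=
          Fintype.card_subtype_compl _
        rw [this, Fintype.card_subtype_eq, hcard]
      have hG'conn : G'.Connected := by
        have hreach : ∀ x : V', G'.Reachable ⟨r, Ne.symm hvr⟩ x := by
          intro ⟨u, hu⟩
          obtain ⟨p, hp⟩ := hwalk u hu
          have := reachable_comap_of_walk G v p hp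
          convert this using 2
        haveI : Nonempty V' := ⟨⟨r, Ne.symm hvr⟩⟩
        exact ⟨fun x y => (hreach x).symm.trans (hreach y)⟩
      -- distances in G are at most distances in G'
      have hdist : ∀ x y : V', G.dist x.val y.val ≤ G'.dist x y := by
        intro x y
        obtain ⟨q, hq⟩ := hG'conn.exists_walk_length_eq_dist x y
        have := SimpleGraph.dist_le (q.map (SimpleGraph.Hom.comap Subtype.val G))
        rwa [SimpleGraph.Walk.length_map, hq] at this
      -- inductive hypothesis
      have hIH := ih (n - 1) (by omega) V' G' hcard' hG'conn
      have hinner : 3 * ∑ x : V', ∑ y : V', G.dist x.val y.val ≤ (n - 2) * (n - 1) * n := by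
        calc 3 * ∑ x : V', ∑ y : V', G.dist x.val y.val
            ≤ 3 * ∑ x : V', ∑ y : V', G'.dist x y := by
              gcongr with x _ y; exact hdist x y
          _ ≤ (n - 1 - 1) * (n - 1) * (n - 1 + 1) := hIH
          _ = (n - 2) * (n - 1) * n := by congr 1 <;> omega
      -- level bound for v
      have hlevel : 2 * ∑ u : V, G.dist v u ≤ n * (n - 1) := by
        have := level_sum_aux (G.dist v) Finset.univ
          (fun u _ j hj => by
            obtain ⟨w, hw⟩ := exists_dist_eq_of_le G hG v u j hj
            exact ⟨w, Finset.mem_univ w, hw⟩)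
        rwa [Finset.card_univ, hcard] at this
      -- decompose the double sum
      have hsplit : ∑ i : V, ∑ j : V, G.dist i j ≤
          (∑ x : V', ∑ y : V', G.dist x.val y.val) + 2 * ∑ u : V, G.dist v u := by
        have e1 : ∀ g : V → ℕ, ∑ i : V, g i = g v + ∑ x : V', g x.val := by
          intro g
          rw [← Finset.add_sum_erase Finset.univ g (Finset.mem_univ v)]
          congr 1
          rw [Finset.sum_subtype (Finset.univ.erase v)
            (p := fun u => u ≠ v) (fun x => by simp) g]
        rw [e1 (fun i => ∑ j : V, G.dist i j)]
        have e2 : ∀ x : V', ∑ j : V, G.dist x.val j =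
            G.dist x.val v + ∑ y : V', G.dist x.val y.val := by
          intro x
          exact e1 (fun j => G.dist x.val j)
        simp only [e2]
        rw [Finset.sum_add_distrib, Finset.sum_comm]
        have e3 : ∑ x : V', G.dist x.val v ≤ ∑ u : V, G.dist v u := by
          have e4 : ∑ x : V', G.dist x.val v = ∑ x : V', G.dist v x.val :=
            Finset.sum_congr rfl (fun x _ => SimpleGraph.dist_comm)
          rw [e4, e1 (fun u => G.dist v u)]
          omega
        omega
      -- put it all together
      obtain ⟨k, hk⟩ : ∃ k, n = k + 2 := ⟨n - 2, by omega⟩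
      subst hk
      simp only [Nat.add_sub_cancel] at *
      have h2 : (k + 2) - 1 = k + 1 := by omega
      rw [h2] at hinner hlevel ⊢
      nlinarith [hinner, hlevel, hsplit]

/-- Among connected unweighted simple graphs on n vertices, the path graph maximizes the
average shortest path length: a_G ≤ (n + 1) / 3. -/
theorem avg_shortest_path_length_le (n : ℕ) (hn : 2 ≤ n) (G : SimpleGraph (Fin n))
    (hG : G.Connected) :
    (1 / (n * (n - 1)) : ℝ) *
        ∑ i : Fin n, ∑ j : Fin n, (if i ≠ j then (G.dist i j : ℝ) else 0) ≤
      (n + 1) / 3 := by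
  have hW := wiener_bound n (Fin n) G (Fintype.card_fin n) hG
  have hsum : ∑ i : Fin n, ∑ j : Fin n, (if i ≠ j then (G.dist i j : ℝ) else 0) =
      ((∑ i : Fin n, ∑ j : Fin n, G.dist i j : ℕ) : ℝ) := by
    push_cast
    congr 1
    funext i
    congr 1
    funext j
    by_cases h : i = j
    · subst h; simp [SimpleGraph.dist_self]
    · simp [h]
  rw [hsum]
  set S : ℕ := ∑ i : Fin n, ∑ j : Fin n, G.dist i j with hS
  have hcast : (3 : ℝ) * S ≤ ((n : ℝ) - 1) * n * (n + 1) := by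
    have := hW
    have h1 : ((3 * S : ℕ) : ℝ) ≤ (((n - 1) * n * (n + 1) : ℕ) : ℝ) := by
      exact_mod_cast this
    push_cast [Nat.cast_sub (by omega : 1 ≤ n)] at h1
    convert h1 using 2 <;> push_cast <;> ring
  have hpos : (0 : ℝ) < (n : ℝ) * ((n : ℝ) - 1) := by
    have : (2 : ℝ) ≤ n := by exact_mod_cast hn
    nlinarith
  rw [one_div, inv_mul_le_iff₀ hpos]
  have hrw : (n : ℝ) * ((n : ℝ) - 1) * (((n : ℝ) + 1) / 3) =
      ((n : ℝ) - 1) * n * (n + 1) / 3 := by ring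
  rw [hrw, le_div_iff₀ (by norm_num : (0:ℝ) < 3)]
  linarith [hcast]
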